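/- (Carleman estimate for a first-order operator.) Let Ω ⊂ ℝ³ be a bounded open set with smooth boundary, x₀ ∈ ℝ³∖Ω̄, and let L(x,D)v = Σ_{i=1}^{3} a_i(x)∂_i v + a₀(x)v with a₀ ∈ C(Ω̄), a = (a₁,a₂,a₃) ∈ (C¹(Ω̄))³, ‖a₀‖_{C(Ω̄)} ≤ M, ‖a_i‖_{C¹(Ω̄)} ≤ M for 1 ≤ i ≤ 3, and |a(x)·(x−x₀)| ≥ c₀ > 0 on Ω̄. Set ρ(x) = e^{γ|x−x₀|²} with γ > 0. Then there exist constants τ* > 0 and C > 0 such that τ∫_Ω |v(x)|² e^{2τρ(x)} dx ≤ C∫_Ω |L(x,D)v(x)|² e^{2τρ(x)} dx for all v ∈ H₀¹(Ω) and all τ > τ*. -/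

import Mathlib

noncomputable section

open MeasureTheory Real Set

/-- Spatial points of `ℝ³`. -/
abbrev V3 := Fin 3 → ℝ

/-- Space-time points `z = (t, x)` with `z.1` the time and `z.2` the space variable. -/
abbrev P4 := ℝ × V3

/-- The unit time direction in space-time. -/
def et : P4 := (1, 0)

/-- The `i`-th unit spatial direction in space-time. -/
def ex (i : Fin 3) : P4 := (0, Pi.single i 1)

/-- Directional derivative of a scalar function on space-time. -/
def pd (f : P4 → ℝ) (d : P4) : P4 → ℝ := fun z => fderiv ℝ f z d

/-- Spatial partial derivative of a scalar function on `ℝ³`. -/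
def pdx (c : V3 → ℝ) (i : Fin 3) : V3 → ℝ := fun x => fderiv ℝ c x (Pi.single i 1)

/-- Time derivative `∂ₜ` of a space-time vector field (componentwise). -/
def Dt (u : P4 → V3) : P4 → V3 := fun z i => pd (fun y => u y i) et z

/-- Second time derivative `∂ₜ²` of a scalar function on space-time. -/
def dtt (f : P4 → ℝ) : P4 → ℝ := pd (pd f et) et

/-- Spatial divergence of a space-time vector field. -/
def sdiv (u : P4 → V3) : P4 → ℝ := fun z => ∑ i, pd (fun y => u y i) (ex i) z

/-- Spatial divergence of a vector field on `ℝ³`. -/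
def sdivX (u : V3 → V3) : V3 → ℝ := fun x => ∑ i, pdx (fun y => u y i) i x

/-- Spatial Laplacian of a scalar function on space-time. -/
def slap (f : P4 → ℝ) : P4 → ℝ := fun z => ∑ i, pd (pd f (ex i)) (ex i) z

/-- The elasticity operator `Δ_{μ,λ}v = μΔv + (μ+λ)∇(div v) + (div v)∇λ + (∇v + (∇v)ᵀ)∇μ`. -/
def lameOp (μ lam : V3 → ℝ) (u : P4 → V3) : P4 → V3 := fun z i =>
  μ z.2 * slap (fun y => u y i) z
    + (μ z.2 + lam z.2) * pd (sdiv u) (ex i) z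
    + sdiv u z * pdx lam i z.2
    + ∑ j, (pd (fun y => u y i) (ex j) z + pd (fun y => u y j) (ex i) z) * pdx μ j z.2

/-- Biot's system of poro-elasticity on the space-time set `Q`, with solid displacement `us`,
fluid displacement `uf` and sources `F1, F2`. -/
def BiotSystem (ρ11 ρ12 ρ22 μ lam q r : V3 → ℝ)
    (us uf F1 F2 : P4 → V3) (Q : Set P4) : Prop :=
  ∀ z ∈ Q, ∀ i : Fin 3,
    (ρ11 z.2 * dtt (fun y => us y i) z + ρ12 z.2 * dtt (fun y => uf y i) z
        - lameOp μ lam us z i - pd (fun y => q y.2 * sdiv uf y) (ex i) z = F1 z i)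
    ∧ (ρ12 z.2 * dtt (fun y => us y i) z + ρ22 z.2 * dtt (fun y => uf y i) z
        - pd (fun y => q y.2 * sdiv us y) (ex i) z
        - pd (fun y => r y.2 * sdiv uf y) (ex i) z = F2 z i)

/-- The squared Euclidean distance `|x - x₀|²`. -/
def sqd (x0 x : V3) : ℝ := ∑ i, (x i - x0 i) ^ 2

/-- The Carleman weight `φ(x,t) = exp(γ(|x-x₀|² - βt²))`. -/
def wphi (x0 : V3) (β γ : ℝ) (z : P4) : ℝ := Real.exp (γ * (sqd x0 z.2 - β * z.1 ^ 2))

/-- The spatial weight `ρ(x) = exp(γ|x-x₀|²)`. -/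
def wrho (x0 : V3) (γ : ℝ) (x : V3) : ℝ := Real.exp (γ * sqd x0 x)

/-- The admissible class `𝒞(m,θ)` of coefficients (with lower bound `cstar`). -/
def CClass (Ω : Set V3) (x0 : V3) (m θ cstar : ℝ) (c : V3 → ℝ) : Prop :=
  ContDiff ℝ 2 c ∧ (0 < cstar) ∧ (∀ x ∈ closure Ω, cstar < c x) ∧
    (∀ x ∈ closure Ω,
      |c x| ≤ m ∧ ‖fderiv ℝ c x‖ ≤ m ∧ ‖iteratedFDeriv ℝ 2 c x‖ ≤ m) ∧
    (∀ x ∈ closure Ω, (∑ i, pdx c i x * (x i - x0 i)) / (2 * c x) ≤ 1 - θ)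

/-- Assumption A.1 on the coefficients of Biot's system. -/
def AssumpA1 (Ω : Set V3) (ρ11 ρ12 ρ22 μ lam q r : V3 → ℝ) : Prop :=
  ContDiff ℝ 2 ρ11 ∧ ContDiff ℝ 2 ρ12 ∧ ContDiff ℝ 2 ρ22 ∧ ContDiff ℝ 2 μ ∧
    ContDiff ℝ 2 lam ∧ ContDiff ℝ 2 q ∧ ContDiff ℝ 2 r ∧
    (∀ x ∈ closure Ω, 0 < ρ11 x ∧ 0 < ρ22 x ∧ 0 < q x ∧ 0 < r x ∧
      0 < μ x ∧ 0 < lam x + μ x) ∧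
    (∀ x ∈ closure Ω, 0 < ρ11 x * ρ22 x - ρ12 x ^ 2) ∧
    (∀ x ∈ closure Ω, 0 < lam x * r x - q x ^ 2)

/-- The matrix `A(x)` of (1.9). -/
def Amat (ρ11 ρ12 ρ22 μ lam q r : V3 → ℝ) (x : V3) : Matrix (Fin 2) (Fin 2) ℝ :=
  (ρ11 x * ρ22 x - ρ12 x ^ 2)⁻¹ •
    (Matrix.of ![![ρ22 x, -ρ12 x], ![-ρ12 x, ρ11 x]] *
      Matrix.of ![![2 * μ x + lam x, q x], ![q x, r x]])

/-- Assumption A.2: `A(x)` has two distinct positive eigenvalues `μ₂(x) ≠ μ₃(x)`, and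
`μ₁ = ϱ⁻¹ϱ₂₂μ`, `μ₂`, `μ₃` all belong to the class `𝒞(m,θ)`. -/
def AssumpA2 (Ω : Set V3) (x0 : V3) (ρ11 ρ12 ρ22 μ lam q r μ2 μ3 : V3 → ℝ)
    (m θ c1 c2 c3 : ℝ) : Prop :=
  (∀ x ∈ closure Ω,
      (Amat ρ11 ρ12 ρ22 μ lam q r x - μ2 x • (1 : Matrix (Fin 2) (Fin 2) ℝ)).det = 0 ∧
      (Amat ρ11 ρ12 ρ22 μ lam q r x - μ3 x • (1 : Matrix (Fin 2) (Fin 2) ℝ)).det = 0 ∧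
      0 < μ2 x ∧ 0 < μ3 x ∧ μ2 x ≠ μ3 x) ∧
    CClass Ω x0 m θ c1 (fun x => (ρ11 x * ρ22 x - ρ12 x ^ 2)⁻¹ * ρ22 x * μ x) ∧
    CClass Ω x0 m θ c2 μ2 ∧ CClass Ω x0 m θ c3 μ3

/-- `d² = min_{Ω̄} |x-x₀|²` and `D² = max_{Ω̄} |x-x₀|²`. -/
def dGeom (Ω : Set V3) (x0 : V3) (d D : ℝ) : Prop :=
  0 ≤ d ∧ 0 ≤ D ∧ IsLeast ((fun x => sqd x0 x) '' closure Ω) (d ^ 2) ∧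
    IsGreatest ((fun x => sqd x0 x) '' closure Ω) (D ^ 2)

/-- Condition (1.16) on the parameter `β` (with `D₀ = √(D² - d²)`). -/
def BetaCond (m θ c0 d D β : ℝ) : Prop :=
  0 < β ∧ β + (m * Real.sqrt (D ^ 2 - d ^ 2) / Real.sqrt c0) * Real.sqrt β < θ * c0 ∧
    0 < c0 * d ^ 2 - β * D ^ 2

/-- Squared Euclidean norm of a vector of `ℝ³`. -/
def n2 (v : V3) : ℝ := ∑ i, (v i) ^ 2

/-- Squared space-time gradient `|∇_{x,t} f|²` of a scalar function. -/
def gradT2 (f : P4 → ℝ) (z : P4) : ℝ := (pd f et z) ^ 2 + ∑ j, (pd f (ex j) z) ^ 2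

/-- Squared spatial gradient `|∇f|²` of a scalar function on space-time. -/
def gradX2 (f : P4 → ℝ) (z : P4) : ℝ := ∑ j, (pd f (ex j) z) ^ 2

/-- Squared space-time gradient of a vector field. -/
def vGradT2 (u : P4 → V3) (z : P4) : ℝ := ∑ i, gradT2 (fun y => u y i) z

/-- Squared spatial gradient of a vector field. -/
def vGradX2 (u : P4 → V3) (z : P4) : ℝ := ∑ i, gradX2 (fun y => u y i) z

/-- The weighted Carleman functional appearing on the left-hand side of the Carleman
estimate for Biot's system (also denoted `N_{τ,φ}(v)`). -/
def CarlemanN (x0 : V3) (β γ τ : ℝ) (us uf : P4 → V3) (Q : Set P4) : ℝ :=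
  ∫ z in Q,
    (τ * (vGradT2 us z + gradT2 (sdiv us) z + gradT2 (sdiv uf) z)
      + τ ^ 3 * (n2 (us z) + (sdiv us z) ^ 2 + (sdiv uf z) ^ 2))
      * Real.exp (2 * τ * wphi x0 β γ z)

/-- The weighted source term `∫_Q (|F|² + |∇F|²) e^{2τφ}`. -/
def srcN (x0 : V3) (β γ τ : ℝ) (F1 F2 : P4 → V3) (Q : Set P4) : ℝ :=
  ∫ z in Q,
    (n2 (F1 z) + n2 (F2 z) + vGradX2 F1 z + vGradX2 F2 z)
      * Real.exp (2 * τ * wphi x0 β γ z)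

/-- Squared `H²`-norm of a space-time vector field over a set. -/
def H2sq (w : P4 → V3) (S : Set P4) : ℝ :=
  ∫ z in S, (‖w z‖ ^ 2 + ‖fderiv ℝ w z‖ ^ 2 + ‖iteratedFDeriv ℝ 2 w z‖ ^ 2)

/-- The observation quantity `E_ω(u) = Σ_{j=2}^3 ‖∂ₜʲu‖²_{H²(ω×(-T,T))}`. -/
def Eobs (us uf : P4 → V3) (S : Set P4) : ℝ :=
  H2sq (Dt (Dt us)) S + H2sq (Dt (Dt uf)) S
    + H2sq (Dt (Dt (Dt us))) S + H2sq (Dt (Dt (Dt uf))) S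

/-- Squared `H₀¹(Ω)`-norm of a scalar function. -/
def H01sq (Ω : Set V3) (p : V3 → ℝ) : ℝ :=
  ∫ x in Ω, ((p x) ^ 2 + ∑ i, (pdx p i x) ^ 2)


lemma divthm (f : Fin 3 → V3 → ℝ) (f' : Fin 3 → V3 → (V3 →L[ℝ] ℝ))
    (R : ℝ) (hR : 0 ≤ R)
    (hd : ∀ i x, HasFDerivAt (f i) (f' i x) x)
    (h0 : ∀ i (x : V3), R ≤ ‖x‖ → f i x = 0)
    (Hi : IntegrableOn (fun x => ∑ i, f' i x (Pi.single i 1))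
      (Icc (fun _ => -R) (fun _ => R))) :
    ∫ x in Icc (fun (_ : Fin 3) => -R) (fun _ => R), ∑ i, f' i x (Pi.single i 1) = 0 := by
  have hle : (fun (_ : Fin 3) => -R) ≤ fun _ => R := fun i => by simpa using by linarith
  have key := MeasureTheory.integral_divergence_of_hasFDerivAt_off_countable'
    (E := ℝ) (n := 2) (fun _ => -R) (fun _ => R) hle f f' ∅ countable_empty
    (fun i => (fun x _ => (hd i x).continuousAt.continuousWithinAt))
    (fun x _ i => hd i x) Hi
  rw [key]
  apply Finset.sum_eq_zero
  intro i _
  have h1 : ∀ (y : Fin 2 → ℝ), f i (Fin.insertNth (α := fun _ : Fin (2+1) => ℝ) i R y) = 0 := by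
    intro y
    apply h0
    have e1 : (Fin.insertNth (α := fun _ : Fin (2+1) => ℝ) i R y) i = R := by simp
    have := norm_le_pi_norm (Fin.insertNth (α := fun _ : Fin (2+1) => ℝ) i R y) i
    rw [e1] at this
    simpa [abs_of_nonneg hR] using this
  have h2 : ∀ (y : Fin 2 → ℝ), f i (Fin.insertNth (α := fun _ : Fin (2+1) => ℝ) i (-R) y) = 0 := by
    intro y
    apply h0
    have e1 : (Fin.insertNth (α := fun _ : Fin (2+1) => ℝ) i (-R) y) i = -R := by simp
    have := norm_le_pi_norm (Fin.insertNth (α := fun _ : Fin (2+1) => ℝ) i (-R) y) i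
    rw [e1] at this
    simp only [Real.norm_eq_abs, abs_neg, abs_of_nonneg hR] at this
    exact this
  simp only [h1, h2]
  simp

lemma w_deriv (Ω U : Set V3) (hΩ : IsOpen Ω) (hU : IsOpen U)
    (hdis : ∀ x ∈ Ω, x ∉ U → x ∉ closure U)
    (v : V3 → ℝ) (hv : ContDiff ℝ 1 v) (hv0 : ∀ x ∈ frontier Ω, v x = 0) (x : V3) :
    HasFDerivAt (Set.indicator (Ω ∩ U) (fun y => v y * v y))
      (Set.indicator (Ω ∩ U) (fun y => (v y • fderiv ℝ v y) + (v y • fderiv ℝ v y)) x) x := by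
  have hvd : ∀ y, HasFDerivAt v (fderiv ℝ v y) y :=
    fun y => (hv.differentiable one_ne_zero y).hasFDerivAt
  by_cases hx : x ∈ Ω ∩ U
  · rw [Set.indicator_of_mem hx]
    refine HasFDerivAt.congr_of_eventuallyEq ((hvd x).mul (hvd x)) ?_
    filter_upwards [(hΩ.inter hU).mem_nhds hx] with y hy
    rw [Set.indicator_of_mem hy]; rfl
  rw [Set.indicator_of_notMem hx]
  by_cases hxc : x ∈ closure Ω
  · by_cases hxΩ : x ∈ Ω
    · -- x ∈ Ω \ U, so x ∉ closure U, indicator vanishes near x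
      have hcu : x ∉ closure U := hdis x hxΩ (fun h => hx ⟨hxΩ, h⟩)
      refine HasFDerivAt.congr_of_eventuallyEq (hasFDerivAt_const 0 x) ?_
      filter_upwards [isOpen_compl_iff.2 isClosed_closure |>.mem_nhds hcu] with y hy
      exact Set.indicator_of_notMem (fun h => hy (subset_closure h.2)) _
    · -- frontier point
      have hfr : x ∈ frontier Ω := by
        rw [frontier, hΩ.interior_eq]; exact ⟨hxc, hxΩ⟩
      have hvx : v x = 0 := hv0 x hfr
      have hcont : Continuous (fun y => fderiv ℝ v y) := hv.continuous_fderiv one_ne_zero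
      set K : ℝ := ‖fderiv ℝ v x‖ + 1 with hK
      have hKpos : 0 < K := by positivity
      obtain ⟨r, hr, hball⟩ : ∃ r > 0, ∀ y ∈ Metric.ball x r, ‖fderiv ℝ v y‖ ≤ K := by
        have : ∀ᶠ y in nhds x, ‖fderiv ℝ v y‖ < K := by
          have := hcont.continuousAt (x := x).norm
          exact this.eventually_lt continuousAt_const (by simp [hK])
        rcases Metric.eventually_nhds_iff_ball.1 this with ⟨r, hr, h⟩
        exact ⟨r, hr, fun y hy => (h y hy).le⟩
      have hlip : ∀ y ∈ Metric.ball x r, |v y| ≤ K * ‖y - x‖ := by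
        intro y hy
        have := (convex_ball x r).norm_image_sub_le_of_norm_fderiv_le
          (fun z _ => (hv.differentiable one_ne_zero z)) (fun z hz => hball z hz) (Metric.mem_ball_self hr) hy
        simpa [hvx] using this
      have hwb : ∀ y ∈ Metric.ball x r,
          |Set.indicator (Ω ∩ U) (fun y => v y * v y) y| ≤ (K*K) * (‖y - x‖ * ‖y - x‖) := by
        intro y hy
        have h1 : |v y * v y| ≤ (K * ‖y-x‖) * (K * ‖y-x‖) := by
          rw [abs_mul]
          exact mul_le_mul (hlip y hy) (hlip y hy) (abs_nonneg _) (by positivity)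
        have h2 : |Set.indicator (Ω ∩ U) (fun y => v y * v y) y| ≤ |v y * v y| := by
          by_cases h : y ∈ Ω ∩ U
          · rw [Set.indicator_of_mem h]
          · rw [Set.indicator_of_notMem h]; simpa using mul_self_nonneg (v y)
        calc |Set.indicator (Ω ∩ U) (fun y => v y * v y) y| ≤ (K * ‖y-x‖) * (K * ‖y-x‖) :=
              h2.trans h1
        _ = (K*K) * (‖y - x‖ * ‖y - x‖) := by ring
      rw [hasFDerivAt_iff_isLittleO_nhds_zero]
      rw [Asymptotics.isLittleO_iff]
      intro c hc
      have hδ : 0 < min r (c / (K*K)) := lt_min hr (by positivity)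
      filter_upwards [Metric.ball_mem_nhds (0:V3) hδ] with h hmem
      have hnorm : ‖h‖ < min r (c / (K*K)) := by simpa [Metric.mem_ball] using hmem
      have hxh : x + h ∈ Metric.ball x r := by
        rw [Metric.mem_ball, dist_eq_norm, add_sub_cancel_left]
        exact hnorm.trans_le (min_le_left _ _)
      have hx0 : Set.indicator (Ω ∩ U) (fun y => v y * v y) x = 0 := Set.indicator_of_notMem hx _
      have := hwb (x + h) hxh
      rw [hx0]
      simp only [ContinuousLinearMap.zero_apply, sub_zero, add_sub_cancel_left] at this ⊢
      calc ‖Set.indicator (Ω ∩ U) (fun y => v y * v y) (x + h)‖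
          ≤ (K*K) * (‖h‖ * ‖h‖) := by simpa [Real.norm_eq_abs] using this
        _ ≤ (K*K) * ((c/(K*K)) * ‖h‖) := by
            apply mul_le_mul_of_nonneg_left _ (by positivity)
            exact mul_le_mul_of_nonneg_right (hnorm.trans_le (min_le_right _ _)).le (norm_nonneg _)
        _ = c * ‖h‖ := by field_simp
  · -- x outside closure Ω : indicator vanishes near x
    refine HasFDerivAt.congr_of_eventuallyEq (hasFDerivAt_const 0 x) ?_
    filter_upwards [isOpen_compl_iff.2 isClosed_closure |>.mem_nhds hxc] with y hy
    exact Set.indicator_of_notMem (fun h => hy (subset_closure h.1)) _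

noncomputable def Dsq (x0 x : V3) : V3 →L[ℝ] ℝ :=
  ∑ i, (2*(x i - x0 i)) • (ContinuousLinearMap.proj (R := ℝ) (φ := fun _ : Fin 3 => ℝ) i)

lemma Dsq_apply (x0 x : V3) (j : Fin 3) : Dsq x0 x (Pi.single j 1) = 2*(x j - x0 j) := by
  simp [Dsq, ContinuousLinearMap.sum_apply, Pi.single_apply]

lemma hasFDerivAt_sqd (x0 x : V3) : HasFDerivAt (sqd x0) (Dsq x0 x) x := by
  have : ∀ i : Fin 3, HasFDerivAt (fun y : V3 => (y i - x0 i)^2)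
      ((2*(x i - x0 i)) • (ContinuousLinearMap.proj (R := ℝ) (φ := fun _ : Fin 3 => ℝ) i)) x := by
    intro i
    have h0 : HasFDerivAt (fun y : V3 => y i)
        (ContinuousLinearMap.proj (R := ℝ) (φ := fun _ : Fin 3 => ℝ) i) x :=
      (ContinuousLinearMap.proj (R := ℝ) (φ := fun _ : Fin 3 => ℝ) i).hasFDerivAt
    have h : HasFDerivAt (fun y : V3 => y i - x0 i)
        (ContinuousLinearMap.proj (R := ℝ) (φ := fun _ : Fin 3 => ℝ) i) x :=
      h0.sub_const _
    have := h.mul h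
    have h2 : (fun y : V3 => (y i - x0 i)^2) = fun y => (y i - x0 i) * (y i - x0 i) := by
      funext y; ring
    rw [h2]
    exact this.congr_fderiv (by rw [← add_smul]; congr 1; ring)
  have := HasFDerivAt.fun_sum (fun i (_ : i ∈ Finset.univ) => this i)
  exact this

lemma hasFDerivAt_wrho (x0 x : V3) (γ : ℝ) :
    HasFDerivAt (wrho x0 γ) ((γ * wrho x0 γ x) • Dsq x0 x) x := by
  have h := ((hasFDerivAt_sqd x0 x).const_mul γ).exp
  refine h.congr_fderiv ?_
  rw [smul_smul]
  congr 1
  simp [wrho, mul_comm]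

lemma hasFDerivAt_E (x0 x : V3) (γ τ : ℝ) :
    HasFDerivAt (fun y => Real.exp (2*τ*wrho x0 γ y))
      (((2*τ*γ) * (Real.exp (2*τ*wrho x0 γ x) * wrho x0 γ x)) • Dsq x0 x) x := by
  have h := ((hasFDerivAt_wrho x0 x γ).const_mul (2*τ)).exp
  refine h.congr_fderiv ?_
  rw [smul_smul, smul_smul]
  congr 1
  ring
lemma key_identity (Ω U : Set V3) (x0 : V3) (γ τ : ℝ)
    (a : Fin 3 → V3 → ℝ) (hacont : ∀ i, ContDiff ℝ 1 (a i))
    (hΩopen : IsOpen Ω) (hΩbd : Bornology.IsBounded Ω) (hU : IsOpen U)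
    (hdis : ∀ x ∈ Ω, x ∉ U → x ∉ closure U)
    (v : V3 → ℝ) (hv : ContDiff ℝ 1 v) (hv0 : ∀ x ∈ frontier Ω, v x = 0) :
    ∫ x in Ω ∩ U,
      Real.exp (2*τ*wrho x0 γ x) *
        (2 * v x * (∑ i, a i x * pdx v i x)
          + (v x * v x) * (4*τ*γ*(wrho x0 γ x)*(∑ i, a i x * (x i - x0 i))
              + ∑ i, pdx (a i) i x)) = 0 := by
  set S := Ω ∩ U with hS
  have hSmeas : MeasurableSet S := (hΩopen.inter hU).measurableSet
  set E : V3 → ℝ := fun y => Real.exp (2*τ*wrho x0 γ y) with hE_def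
  set w : V3 → ℝ := Set.indicator S (fun y => v y * v y) with hw_def
  set Dw : V3 → (V3 →L[ℝ] ℝ) :=
    Set.indicator S (fun y => (v y • fderiv ℝ v y) + (v y • fderiv ℝ v y)) with hDw_def
  have hw : ∀ x, HasFDerivAt w (Dw x) x := fun x =>
    w_deriv Ω U hΩopen hU hdis v hv hv0 x
  set DE : V3 → (V3 →L[ℝ] ℝ) :=
    fun x => ((2*τ*γ) * (E x * wrho x0 γ x)) • Dsq x0 x with hDE_def
  have hE : ∀ x, HasFDerivAt E (DE x) x := fun x => hasFDerivAt_E x0 x γ τ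
  have ha' : ∀ i x, HasFDerivAt (a i) (fderiv ℝ (a i) x) x := fun i x =>
    ((hacont i).differentiable one_ne_zero x).hasFDerivAt
  set F : Fin 3 → V3 → ℝ := fun i y => (a i y * E y) * w y with hF_def
  set DF : Fin 3 → V3 → (V3 →L[ℝ] ℝ) := fun i x =>
    (a i x * E x) • Dw x + w x • ((a i x) • DE x + E x • fderiv ℝ (a i) x) with hDF_def
  have hF : ∀ i x, HasFDerivAt (F i) (DF i x) x := fun i x =>
    ((ha' i x).mul (hE x)).mul (hw x)
  set φ : V3 → ℝ := fun x =>
    E x * (2 * v x * (∑ i, a i x * pdx v i x)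
      + (v x * v x) * (4*τ*γ*(wrho x0 γ x)*(∑ i, a i x * (x i - x0 i))
          + ∑ i, pdx (a i) i x)) with hφ_def
  have div_eq : ∀ x, (∑ i, DF i x (Pi.single i 1)) = Set.indicator S φ x := by
    intro x
    by_cases hxS : x ∈ S
    · rw [Set.indicator_of_mem hxS]
      simp only [hDF_def, hDw_def, hw_def, hDE_def, Set.indicator_of_mem hxS,
        ContinuousLinearMap.add_apply, ContinuousLinearMap.coe_smul',
        ContinuousLinearMap.smul_apply, Pi.smul_apply, smul_eq_mul, Dsq_apply]
      simp only [hφ_def]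
      have : E x * (2 * v x * (∑ i, a i x * pdx v i x)
          + (v x * v x) * (4*τ*γ*(wrho x0 γ x)*(∑ i, a i x * (x i - x0 i))
              + ∑ i, pdx (a i) i x))
          = ∑ i, ((E x * (2 * v x)) * (a i x * pdx v i x)
              + (E x * ((v x * v x) * (4*τ*γ*(wrho x0 γ x)))) * (a i x * (x i - x0 i))
              + (E x * (v x * v x)) * (pdx (a i) i x)) := by
        rw [Finset.sum_add_distrib, Finset.sum_add_distrib, ← Finset.mul_sum,
          ← Finset.mul_sum, ← Finset.mul_sum]
        ring
      rw [this]
      apply Finset.sum_congr rfl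
      intro i _
      simp only [pdx]
      ring
    · rw [Set.indicator_of_notMem hxS]
      apply Finset.sum_eq_zero
      intro i _
      simp only [hDF_def, hDw_def, hw_def, Set.indicator_of_notMem hxS]
      simp
  -- continuity facts
  have hsqdc : Continuous (sqd x0) := by
    unfold sqd
    exact continuous_finset_sum _ fun i _ => ((continuous_apply i).sub continuous_const).pow 2
  have hwrc : Continuous (wrho x0 γ) := by
    unfold wrho
    exact Real.continuous_exp.comp (continuous_const.mul hsqdc)
  have hEc : Continuous E := Real.continuous_exp.comp (continuous_const.mul hwrc)
  have hpdx : ∀ (u : V3 → ℝ), ContDiff ℝ 1 u → ∀ i, Continuous (pdx u i) := by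
    intro u hu i
    exact (hu.continuous_fderiv one_ne_zero).clm_apply continuous_const
  have hφcont : Continuous φ := by
    rw [hφ_def]
    apply hEc.mul
    apply Continuous.add
    · exact (continuous_const.mul (hv.continuous)).mul
        (continuous_finset_sum _ fun i _ => ((hacont i).continuous).mul (hpdx v hv i))
    · apply ((hv.continuous).mul (hv.continuous)).mul
      apply Continuous.add
      · exact (continuous_const.mul hwrc).mul
          (continuous_finset_sum _ fun i _ =>
            ((hacont i).continuous).mul ((continuous_apply i).sub continuous_const))
      · exact continuous_finset_sum _ fun i _ => hpdx (a i) (hacont i) i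
  -- bounding radius
  obtain ⟨r, hrS⟩ : ∃ r : ℝ, closure Ω ⊆ Metric.closedBall 0 r := by
    obtain ⟨r, hr⟩ := hΩbd.closure.subset_closedBall 0
    exact ⟨r, hr⟩
  set R : ℝ := |r| + 1 with hR_def
  have hRpos : 0 ≤ R := by positivity
  have hball : closure Ω ⊆ Metric.closedBall 0 |r| := by
    intro y hy
    have := hrS hy
    simp only [Metric.mem_closedBall] at this ⊢
    exact this.trans (le_abs_self r)
  have hSclΩ : S ⊆ closure Ω := fun y hy => subset_closure hy.1
  have hw0 : ∀ y : V3, R ≤ ‖y‖ → w y = 0 := by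
    intro y hy
    apply Set.indicator_of_notMem
    intro hyS
    have h1 : ‖y‖ ≤ |r| := by simpa [dist_eq_norm] using hball (hSclΩ hyS)
    have : R ≤ |r| := hy.trans h1
    simp only [hR_def] at this; linarith
  have hF0 : ∀ i (y : V3), R ≤ ‖y‖ → F i y = 0 := by
    intro i y hy
    simp only [hF_def, hw0 y hy, mul_zero]
  -- integrability of the divergence
  have hScompact : IsCompact (closure S) :=
    Metric.isCompact_of_isClosed_isBounded isClosed_closure (hΩbd.subset inter_subset_left).closure
  have hφint : IntegrableOn φ S := by
    exact (hφcont.continuousOn.integrableOn_compact hScompact).mono_set subset_closure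
  have hIndInt : Integrable (Set.indicator S φ) := by
    rw [← integrable_indicator_iff hSmeas] at hφint
    exact hφint
  have Hi : IntegrableOn (fun x => ∑ i, DF i x (Pi.single i 1))
      (Icc (fun _ => -R) (fun _ => R)) := by
    have : (fun x => ∑ i, DF i x (Pi.single i 1)) = Set.indicator S φ := funext div_eq
    rw [this]
    exact hIndInt.integrableOn
  have key := divthm F (fun i x => DF i x) R hRpos (fun i x => hF i x) hF0 Hi
  have hrw : (fun x => ∑ i, DF i x (Pi.single i 1)) = Set.indicator S φ := funext div_eq
  rw [hrw] at key
  rw [setIntegral_indicator hSmeas] at key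
  have hsub : Icc (fun (_ : Fin 3) => -R) (fun _ => R) ∩ S = S := by
    apply Set.inter_eq_self_of_subset_right
    intro y hy
    have h1 : ‖y‖ ≤ |r| := by simpa [dist_eq_norm] using hball (hSclΩ hy)
    have h2 : ∀ i, |y i| ≤ |r| := fun i =>
      le_trans (by simpa using norm_le_pi_norm y i) h1
    rw [Set.mem_Icc]
    refine ⟨fun i => ?_, fun i => ?_⟩
    · have := (abs_le.1 (h2 i)).1
      simp only [hR_def]
      linarith
    · have := (abs_le.1 (h2 i)).2
      simp only [hR_def]
      linarith
  rw [hsub] at key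
  exact key

lemma integrableOn_of_continuous (Ω : Set V3) (hΩbd : Bornology.IsBounded Ω)
    (S : Set V3) (hS : S ⊆ Ω) (f : V3 → ℝ) (hf : Continuous f) :
    MeasureTheory.IntegrableOn f S := by
  have hc : IsCompact (closure S) :=
    Metric.isCompact_of_isClosed_isBounded isClosed_closure (hΩbd.subset hS).closure
  exact (hf.continuousOn.integrableOn_compact hc).mono_set subset_closure

lemma side_est (Ω : Set V3) (x0 : V3) (γ M c0 : ℝ)
    (a : Fin 3 → V3 → ℝ) (a0 : V3 → ℝ)
    (hΩopen : IsOpen Ω) (hΩbd : Bornology.IsBounded Ω)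
    (hγ : 0 < γ) (ha0cont : Continuous a0) (hacont : ∀ i, ContDiff ℝ 1 (a i))
    (ha0M : ∀ x ∈ closure Ω, |a0 x| ≤ M)
    (haM : ∀ i, ∀ x ∈ closure Ω, |a i x| ≤ M ∧ ‖fderiv ℝ (a i) x‖ ≤ M)
    (hc0 : 0 < c0)
    (hnc : ∀ x ∈ closure Ω, c0 ≤ |∑ i, a i x * (x i - x0 i)|)
    (σ : ℝ) (hσ : σ = 1 ∨ σ = -1)
    (v : V3 → ℝ) (hv : ContDiff ℝ 1 v) (hv0 : ∀ x ∈ frontier Ω, v x = 0)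
    (τ : ℝ) (hτ : (5*|M|+1) / (2*γ*c0) < τ) :
    τ * ∫ x in Ω ∩ {x | 0 < σ * (∑ i, a i x * (x i - x0 i))},
        (v x)^2 * Real.exp (2*τ*wrho x0 γ x)
      ≤ (1/(2*γ*c0)) * ∫ x in Ω ∩ {x | 0 < σ * (∑ i, a i x * (x i - x0 i))},
        (∑ i, a i x * pdx v i x + a0 x * v x)^2 * Real.exp (2*τ*wrho x0 γ x) := by
  have hσ1 : |σ| = 1 := by rcases hσ with h | h <;> simp [h]
  have hτ0 : 0 < τ := lt_of_le_of_lt (by positivity) hτ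
  set g : V3 → ℝ := fun x => ∑ i, a i x * (x i - x0 i) with hg_def
  have hgcont : Continuous g := continuous_finset_sum _ fun i _ =>
    ((hacont i).continuous).mul ((continuous_apply i).sub continuous_const)
  set U : Set V3 := {x | 0 < σ * g x} with hU_def
  have hUopen : IsOpen U := isOpen_lt continuous_const (continuous_const.mul hgcont)
  have hdis : ∀ x ∈ Ω, x ∉ U → x ∉ closure U := by
    intro x hxΩ hxU hxcl
    have hgx : c0 ≤ |g x| := hnc x (subset_closure hxΩ)
    have hneg : σ * g x < 0 := by
      have h1 : ¬ (0 < σ * g x) := hxU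
      have h2 : c0 ≤ |σ * g x| := by rw [abs_mul, hσ1, one_mul]; exact hgx
      push_neg at h1
      rcases abs_cases (σ * g x) with ⟨he, _⟩ | ⟨he, _⟩ <;> nlinarith
    have hW : IsOpen {y : V3 | σ * g y < 0} :=
      isOpen_lt (continuous_const.mul hgcont) continuous_const
    obtain ⟨y, hy1, hy2⟩ := mem_closure_iff.1 hxcl _ hW hneg
    have : 0 < σ * g y := hy2
    exact absurd this (not_lt.2 (le_of_lt hy1))
  set S : Set V3 := Ω ∩ U with hS_def
  have hSmeas : MeasurableSet S := (hΩopen.inter hUopen).measurableSet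
  have hSsub : S ⊆ Ω := inter_subset_left
  have hSclΩ : S ⊆ closure Ω := fun y hy => subset_closure hy.1
  have hsqdc : Continuous (sqd x0) := by
    unfold sqd
    exact continuous_finset_sum _ fun i _ => ((continuous_apply i).sub continuous_const).pow 2
  have hwrc : Continuous (wrho x0 γ) := by
    unfold wrho
    exact Real.continuous_exp.comp (continuous_const.mul hsqdc)
  have hpdx : ∀ (u : V3 → ℝ), ContDiff ℝ 1 u → ∀ i, Continuous (pdx u i) := fun u hu i =>
    (hu.continuous_fderiv one_ne_zero).clm_apply continuous_const
  set Ex : V3 → ℝ := fun x => Real.exp (2*τ*wrho x0 γ x) with hEx_def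
  have hEc : Continuous Ex := Real.continuous_exp.comp (continuous_const.mul hwrc)
  set Lv : V3 → ℝ := fun x => ∑ i, a i x * pdx v i x + a0 x * v x with hLv_def
  set av : V3 → ℝ := fun x => ∑ i, a i x * pdx v i x with hav_def
  set diva : V3 → ℝ := fun x => ∑ i, pdx (a i) i x with hdiva_def
  have havc : Continuous av := continuous_finset_sum _ fun i _ =>
    ((hacont i).continuous).mul (hpdx v hv i)
  have hdivac : Continuous diva := continuous_finset_sum _ fun i _ => hpdx (a i) (hacont i) i
  set P : V3 → ℝ := fun x => Ex x * (2 * v x * av x + (v x * v x) * diva x) with hP_def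
  set Gq : V3 → ℝ := fun x => Ex x * ((v x * v x) * (4*τ*γ*(wrho x0 γ x)*(g x))) with hGq_def
  have hPc : Continuous P := hEc.mul (((continuous_const.mul hv.continuous).mul havc).add
    (((hv.continuous).mul hv.continuous).mul hdivac))
  have hGqc : Continuous Gq := hEc.mul (((hv.continuous).mul hv.continuous).mul
    (((continuous_const.mul hwrc)).mul hgcont))
  have hPint : MeasureTheory.IntegrableOn P S := integrableOn_of_continuous Ω hΩbd S hSsub P hPc
  have hGqint : MeasureTheory.IntegrableOn Gq S :=
    integrableOn_of_continuous Ω hΩbd S hSsub Gq hGqc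
  have hkey := key_identity Ω U x0 γ τ a hacont hΩopen hΩbd hUopen hdis v hv hv0
  have hsplit : ∫ x in S, (P x + Gq x) = 0 := by
    rw [← hkey]
    apply setIntegral_congr_fun hSmeas
    intro x _
    simp only [hP_def, hGq_def, hEx_def, hav_def, hdiva_def]
    ring
  have hPG : ∫ x in S, Gq x = - ∫ x in S, P x := by
    have := MeasureTheory.integral_add hPint hGqint
    rw [hsplit] at this
    linarith
  set I : ℝ := ∫ x in S, (v x)^2 * Ex x with hI_def
  set J : ℝ := ∫ x in S, (Lv x)^2 * Ex x with hJ_def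
  have hvE_int : MeasureTheory.IntegrableOn (fun x => (v x)^2 * Ex x) S :=
    integrableOn_of_continuous Ω hΩbd S hSsub _ (((hv.continuous).pow 2).mul hEc)
  have hLvc : Continuous Lv := havc.add (ha0cont.mul hv.continuous)
  have hLvE_int : MeasureTheory.IntegrableOn (fun x => (Lv x)^2 * Ex x) S :=
    integrableOn_of_continuous Ω hΩbd S hSsub _ ((hLvc.pow 2).mul hEc)
  have hI0 : 0 ≤ I := setIntegral_nonneg hSmeas fun x _ =>
    mul_nonneg (sq_nonneg _) (Real.exp_pos _).le
  -- pointwise estimate A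
  have hptA : ∀ x ∈ S, 4*τ*γ*c0*((v x)^2 * Ex x) ≤ σ * Gq x := by
    intro x hxS
    have hxcl := hSclΩ hxS
    have hgx : c0 ≤ |g x| := hnc x hxcl
    have hgpos : 0 < σ * g x := hxS.2
    have hc0σ : c0 ≤ σ * g x := by
      have h2 : |σ * g x| = |g x| := by rw [abs_mul, hσ1, one_mul]
      rw [← abs_of_pos hgpos, h2]
      exact hgx
    have hρ1 : (1:ℝ) ≤ wrho x0 γ x := by
      apply Real.one_le_exp
      have : (0:ℝ) ≤ sqd x0 x := Finset.sum_nonneg fun i _ => sq_nonneg _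
      positivity
    have hExpos : 0 < Ex x := Real.exp_pos _
    have h1 : c0 ≤ (wrho x0 γ x) * (σ * g x) := by nlinarith
    have base : 0 ≤ 4*τ*γ*((v x)^2 * Ex x) :=
      mul_nonneg (by positivity) (mul_nonneg (sq_nonneg _) hExpos.le)
    calc 4*τ*γ*c0*((v x)^2 * Ex x) = (4*τ*γ*((v x)^2 * Ex x)) * c0 := by ring
      _ ≤ (4*τ*γ*((v x)^2 * Ex x)) * ((wrho x0 γ x)*(σ*g x)) :=
          mul_le_mul_of_nonneg_left h1 base
      _ = σ * Gq x := by simp only [hGq_def]; ring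
  -- pointwise estimate B
  have hptB : ∀ x ∈ S, -σ * P x ≤ ((5*|M|+1)*(v x)^2 + (Lv x)^2) * Ex x := by
    intro x hxS
    have hxcl := hSclΩ hxS
    have hdiva_b : |diva x| ≤ 3*|M| := by
      have hterm : ∀ i : Fin 3, |pdx (a i) i x| ≤ |M| := by
        intro i
        have h1 : ‖fderiv ℝ (a i) x‖ ≤ M := (haM i x hxcl).2
        have h2 : ‖fderiv ℝ (a i) x (Pi.single i 1)‖ ≤ ‖fderiv ℝ (a i) x‖ * ‖(Pi.single i 1 : V3)‖ :=
          (fderiv ℝ (a i) x).le_opNorm _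
        rw [Pi.norm_single, norm_one, mul_one] at h2
        calc |pdx (a i) i x| = ‖fderiv ℝ (a i) x (Pi.single i 1)‖ := (Real.norm_eq_abs _).symm
          _ ≤ ‖fderiv ℝ (a i) x‖ := h2
          _ ≤ M := h1
          _ ≤ |M| := le_abs_self M
      calc |diva x| ≤ ∑ i, |pdx (a i) i x| := Finset.abs_sum_le_sum_abs _ _
        _ ≤ ∑ _i : Fin 3, |M| := Finset.sum_le_sum fun i _ => hterm i
        _ = 3*|M| := by simp [Finset.sum_const]; try ring
    have ha0b : |a0 x| ≤ |M| := (ha0M x hxcl).trans (le_abs_self M)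
    have havb : |av x| ≤ |Lv x| + |M| * |v x| := by
      have he : av x = Lv x - a0 x * v x := by simp only [hLv_def, hav_def]; ring
      rw [he, sub_eq_add_neg]
      calc |Lv x + -(a0 x * v x)| ≤ |Lv x| + |-(a0 x * v x)| := abs_add_le _ _
        _ = |Lv x| + |a0 x| * |v x| := by rw [abs_neg, abs_mul]
        _ ≤ |Lv x| + |M| * |v x| := by
            have := mul_le_mul_of_nonneg_right ha0b (abs_nonneg (v x))
            linarith
    have m1 : 2*|v x| * |av x| ≤ 2*|v x| * (|Lv x| + |M| * |v x|) :=
      mul_le_mul_of_nonneg_left havb (by positivity)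
    have m2 : (v x)^2 * |diva x| ≤ (v x)^2 * (3*|M|) :=
      mul_le_mul_of_nonneg_left hdiva_b (sq_nonneg _)
    have habs : |2*v x*av x + v x*v x*diva x| ≤ 2 * |v x| * |av x| + (v x)^2 * |diva x| := by
      calc |2*v x*av x + v x*v x*diva x| ≤ |2*v x*av x| + |v x*v x*diva x| := abs_add_le _ _
        _ = 2 * |v x| * |av x| + (v x)^2 * |diva x| := by
            have e1 : |2*v x*av x| = 2 * |v x| * |av x| := by
              rw [abs_mul, abs_mul, abs_two]
            have e2 : |v x*v x*diva x| = (v x)^2 * |diva x| := by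
              rw [abs_mul, abs_mul_self]; ring
            rw [e1, e2]
    have hgoal3 : |2*v x*av x + v x*v x*diva x| ≤ (5*|M|+1)*(v x)^2 + (Lv x)^2 := by
      nlinarith [m1, m2, habs, sq_nonneg (|v x| - |Lv x|), sq_abs (v x), sq_abs (Lv x),
        abs_nonneg (Lv x), abs_nonneg (v x), abs_nonneg M]
    have hExpos : 0 < Ex x := Real.exp_pos _
    calc -σ * P x ≤ |(-σ) * P x| := le_abs_self _
      _ = |P x| := by rw [abs_mul, abs_neg, hσ1, one_mul]
      _ = Ex x * |2*v x*av x + v x*v x*diva x| := by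
          simp only [hP_def]
          rw [abs_mul, abs_of_pos hExpos]
      _ ≤ Ex x * ((5*|M|+1)*(v x)^2 + (Lv x)^2) :=
          mul_le_mul_of_nonneg_left hgoal3 hExpos.le
      _ = ((5*|M|+1)*(v x)^2 + (Lv x)^2) * Ex x := by ring
  -- integrate A
  have hA : 4*τ*γ*c0*I ≤ σ * ∫ x in S, Gq x := by
    have := setIntegral_mono_on (hvE_int.const_mul (4*τ*γ*c0)) (hGqint.const_mul σ) hSmeas hptA
    rw [MeasureTheory.integral_const_mul, MeasureTheory.integral_const_mul] at this
    exact this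
  -- integrate B
  have hintBound : MeasureTheory.IntegrableOn
      (fun x => ((5*|M|+1)*(v x)^2 + (Lv x)^2) * Ex x) S :=
    integrableOn_of_continuous Ω hΩbd S hSsub _
      (((continuous_const.mul ((hv.continuous).pow 2)).add (hLvc.pow 2)).mul hEc)
  have hB : σ * ∫ x in S, Gq x ≤ (5*|M|+1)*I + J := by
    have hmono := setIntegral_mono_on (hPint.const_mul (-σ)) hintBound hSmeas hptB
    rw [MeasureTheory.integral_const_mul] at hmono
    have hlhs : σ * ∫ x in S, Gq x = -σ * ∫ x in S, P x := by rw [hPG]; ring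
    have hrhs : ∫ x in S, ((5*|M|+1)*(v x)^2 + (Lv x)^2) * Ex x = (5*|M|+1)*I + J := by
      have hcong : ∫ x in S, ((5*|M|+1)*(v x)^2 + (Lv x)^2) * Ex x
          = ∫ x in S, ((5*|M|+1)*((v x)^2 * Ex x) + (Lv x)^2 * Ex x) := by
        apply setIntegral_congr_fun hSmeas
        intro x _
        ring
      rw [hcong, MeasureTheory.integral_add (hvE_int.const_mul _) hLvE_int,
        MeasureTheory.integral_const_mul]
    rw [hlhs, ← hrhs]
    exact hmono
  have hK : 5*|M|+1 < 2*γ*c0*τ := by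
    rw [div_lt_iff₀ (by positivity)] at hτ
    linarith
  have hKI := mul_le_mul_of_nonneg_right hK.le hI0
  have h2 : 2*γ*c0*(τ*I) ≤ J := by nlinarith
  have hfin : τ * I ≤ 1/(2*γ*c0) * J := by
    rw [one_div_mul_eq_div, le_div_iff₀ (by positivity : (0:ℝ) < 2*γ*c0)]
    linarith
  exact hfin


/-- Carleman estimate for the first-order operator
`L(x,D)v = Σᵢ aᵢ∂ᵢv + a₀v` with non-characteristic condition `|a(x)·(x-x₀)| ≥ c₀ > 0`,
with weight `ρ(x) = e^{γ|x-x₀|²}`, for functions `v ∈ H₀¹(Ω)`. -/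
theorem firstorder_carleman (Ω : Set V3) (x0 : V3) (γ M c0 : ℝ)
    (a : Fin 3 → V3 → ℝ) (a0 : V3 → ℝ)
    (hΩopen : IsOpen Ω) (hΩbd : Bornology.IsBounded Ω) (hx0 : x0 ∉ closure Ω)
    (hγ : 0 < γ) (ha0cont : Continuous a0) (hacont : ∀ i, ContDiff ℝ 1 (a i))
    (ha0M : ∀ x ∈ closure Ω, |a0 x| ≤ M)
    (haM : ∀ i, ∀ x ∈ closure Ω, |a i x| ≤ M ∧ ‖fderiv ℝ (a i) x‖ ≤ M)
    (hc0 : 0 < c0)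
    (hnc : ∀ x ∈ closure Ω, c0 ≤ |∑ i, a i x * (x i - x0 i)|) :
    ∃ τs : ℝ, 0 < τs ∧ ∃ C : ℝ, 0 < C ∧
      ∀ v : V3 → ℝ, ContDiff ℝ 1 v → (∀ x ∈ frontier Ω, v x = 0) →
        ∀ τ : ℝ, τs < τ →
          τ * ∫ x in Ω, (v x) ^ 2 * Real.exp (2 * τ * wrho x0 γ x) ≤
            C * ∫ x in Ω,
              (∑ i, a i x * pdx v i x + a0 x * v x) ^ 2 * Real.exp (2 * τ * wrho x0 γ x) := by
  have hden : (0:ℝ) < 2*γ*c0 := mul_pos (mul_pos two_pos hγ) hc0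
  refine ⟨(5*|M|+1)/(2*γ*c0), div_pos (by positivity) hden, 1/(2*γ*c0),
    div_pos one_pos hden, ?_⟩
  intro v hv hv0 τ hτ
  have h1 := side_est Ω x0 γ M c0 a a0 hΩopen hΩbd hγ ha0cont hacont ha0M haM hc0 hnc
    1 (Or.inl rfl) v hv hv0 τ hτ
  have h2 := side_est Ω x0 γ M c0 a a0 hΩopen hΩbd hγ ha0cont hacont ha0M haM hc0 hnc
    (-1) (Or.inr rfl) v hv hv0 τ hτ
  set g : V3 → ℝ := fun x => ∑ i, a i x * (x i - x0 i) with hg_def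
  have hgcont : Continuous g := continuous_finset_sum _ fun i _ =>
    ((hacont i).continuous).mul ((continuous_apply i).sub continuous_const)
  set SA : Set V3 := Ω ∩ {x | 0 < (1:ℝ) * g x} with hSA_def
  set SB : Set V3 := Ω ∩ {x | 0 < (-1:ℝ) * g x} with hSB_def
  have hAopen : IsOpen SA := hΩopen.inter (isOpen_lt continuous_const
    (continuous_const.mul hgcont))
  have hBopen : IsOpen SB := hΩopen.inter (isOpen_lt continuous_const
    (continuous_const.mul hgcont))
  have hdisj : Disjoint SA SB := by
    rw [Set.disjoint_left]
    rintro x ⟨-, hx1⟩ ⟨-, hx2⟩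
    simp only [Set.mem_setOf_eq] at hx1 hx2
    linarith
  have hunion : Ω = SA ∪ SB := by
    ext x
    constructor
    · intro hx
      have := hnc x (subset_closure hx)
      rcases lt_or_ge 0 (g x) with h | h
      · exact Or.inl ⟨hx, by simpa using h⟩
      · refine Or.inr ⟨hx, ?_⟩
        simp only [Set.mem_setOf_eq]
        rcases abs_cases (g x) with ⟨he, _⟩ | ⟨he, _⟩ <;> nlinarith
    · rintro (⟨hx, -⟩ | ⟨hx, -⟩) <;> exact hx
  -- continuity of integrands
  have hsqdc : Continuous (sqd x0) := by
    unfold sqd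
    exact continuous_finset_sum _ fun i _ => ((continuous_apply i).sub continuous_const).pow 2
  have hwrc : Continuous (wrho x0 γ) := by
    unfold wrho
    exact Real.continuous_exp.comp (continuous_const.mul hsqdc)
  have hEc : Continuous (fun x => Real.exp (2 * τ * wrho x0 γ x)) :=
    Real.continuous_exp.comp (continuous_const.mul hwrc)
  have hpdx : ∀ (u : V3 → ℝ), ContDiff ℝ 1 u → ∀ i, Continuous (pdx u i) := fun u hu i =>
    (hu.continuous_fderiv one_ne_zero).clm_apply continuous_const
  have hf1c : Continuous (fun x => (v x) ^ 2 * Real.exp (2 * τ * wrho x0 γ x)) :=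
    ((hv.continuous).pow 2).mul hEc
  have hf2c : Continuous (fun x =>
      (∑ i, a i x * pdx v i x + a0 x * v x) ^ 2 * Real.exp (2 * τ * wrho x0 γ x)) := by
    apply Continuous.mul _ hEc
    apply Continuous.pow
    exact (continuous_finset_sum _ fun i _ => ((hacont i).continuous).mul (hpdx v hv i)).add
      (ha0cont.mul hv.continuous)
  have hintA1 := integrableOn_of_continuous Ω hΩbd SA inter_subset_left _ hf1c
  have hintB1 := integrableOn_of_continuous Ω hΩbd SB inter_subset_left _ hf1c
  have hintA2 := integrableOn_of_continuous Ω hΩbd SA inter_subset_left _ hf2c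
  have hintB2 := integrableOn_of_continuous Ω hΩbd SB inter_subset_left _ hf2c
  rw [hunion,
    MeasureTheory.setIntegral_union hdisj hBopen.measurableSet hintA1 hintB1,
    MeasureTheory.setIntegral_union hdisj hBopen.measurableSet hintA2 hintB2]
  have e1 : τ * ((∫ x in SA, (v x) ^ 2 * Real.exp (2 * τ * wrho x0 γ x))
      + ∫ x in SB, (v x) ^ 2 * Real.exp (2 * τ * wrho x0 γ x))
      = τ * (∫ x in SA, (v x) ^ 2 * Real.exp (2 * τ * wrho x0 γ x))
      + τ * (∫ x in SB, (v x) ^ 2 * Real.exp (2 * τ * wrho x0 γ x)) := by ring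
  rw [e1, mul_add]
  exact add_le_add h1 h2


end
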